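/- If every principal right ideal of a ring R is small injective as a right R-module, then J(R) = 0. -/

import Mathlib

set_option maxHeartbeats 1000000


/-- A right ideal `I` of `R` (viewed as a submodule of `R` over `Rᵐᵒᵖ`) is small if
`I + K ≠ R` for every proper right ideal `K`. -/
def IsSmallRightIdeal {R : Type*} [Ring R] (I : Submodule Rᵐᵒᵖ R) : Prop :=
  ∀ K : Submodule Rᵐᵒᵖ R, I ⊔ K = ⊤ → K = ⊤

/-- A right `R`-module `M` is small injective if every `R`-homomorphism from a small right
ideal of `R` to `M` extends to a homomorphism `R → M`. -/
def SmallInjective (R : Type*) [Ring R] (M : Type*) [AddCommGroup M] [Module Rᵐᵒᵖ M] : Prop :=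
  ∀ I : Submodule Rᵐᵒᵖ R, IsSmallRightIdeal I → ∀ f : I →ₗ[Rᵐᵒᵖ] M,
    ∃ g : R →ₗ[Rᵐᵒᵖ] M, ∀ x : I, g x = f x

/-- Elements of the Jacobson radical give left-invertible `1 + a`. -/
lemma aux_exists_left_inv {R : Type*} [Ring R] {a : R}
    (ha : a ∈ (⊥ : Ideal R).jacobson) : ∃ z : R, z * (1 + a) = 1 := by
  obtain ⟨z, hz⟩ := Ideal.mem_jacobson_iff.mp ha 1
  rw [Ideal.mem_bot, mul_one, sub_eq_zero] at hz
  exact ⟨z, by rw [mul_add, mul_one, add_comm, hz]⟩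

/-- Elements of the Jacobson radical give units `1 + a`. -/
lemma aux_isUnit_one_add {R : Type*} [Ring R] {a : R}
    (ha : a ∈ (⊥ : Ideal R).jacobson) : IsUnit (1 + a) := by
  obtain ⟨z, hz⟩ := aux_exists_left_inv ha
  have hadd : z * a + z = 1 := by rw [mul_add, mul_one, add_comm] at hz; exact hz
  have hz2 : z = 1 + -(z * a) := by
    rw [← sub_eq_add_neg]; exact eq_sub_of_add_eq' hadd
  obtain ⟨z', hz'⟩ := aux_exists_left_inv (Submodule.neg_mem _ (Ideal.mul_mem_left _ z ha))
  rw [← hz2] at hz'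
  have hz'' : z' = 1 + a := by
    have : z' * (z * (1 + a)) = z' := by rw [hz, mul_one]
    rw [← this, ← mul_assoc, hz', one_mul]
  exact ⟨⟨1 + a, z, by rw [← hz'', hz'], hz⟩, rfl⟩

/-- The bottom ideal's jacobson radical is closed under right multiplication. -/
lemma aux_mul_mem_right {R : Type*} [Ring R] {x : R} (r : R)
    (hx : x ∈ (⊥ : Ideal R).jacobson) : x * r ∈ (⊥ : Ideal R).jacobson :=
  Ideal.mul_mem_right r _ hx

/-- If every principal right ideal of `R` is small injective as a right `R`-module,
then `J(R) = 0`. -/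
theorem stmt_2 {R : Type*} [Ring R]
    (h : ∀ x : R, SmallInjective R (Submodule.span Rᵐᵒᵖ ({x} : Set R))) :
    (⊥ : Ideal R).jacobson = ⊥ := by
  rw [eq_bot_iff]
  intro x hx
  have hsmall : IsSmallRightIdeal (Submodule.span Rᵐᵒᵖ ({x} : Set R)) := by
    intro K hK
    rw [eq_top_iff]
    intro z _
    have h1 : (1 : R) ∈ Submodule.span Rᵐᵒᵖ ({x} : Set R) ⊔ K := hK ▸ Submodule.mem_top
    obtain ⟨a, ha, b, hb, hab⟩ := Submodule.mem_sup.mp h1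
    obtain ⟨r, hr⟩ := Submodule.mem_span_singleton.mp ha
    have hu : IsUnit b := by
      have haJ : -a ∈ (⊥ : Ideal R).jacobson := by
        have : a = x * r.unop := by rw [← hr]; rfl
        rw [this]
        exact Submodule.neg_mem _ (aux_mul_mem_right r.unop hx)
      have := aux_isUnit_one_add haJ
      have hb' : b = 1 + -a := by rw [← hab]; abel
      rwa [← hb'] at this
    obtain ⟨u, hu⟩ := hu
    have hz : z = MulOpposite.op ((↑u⁻¹ : R) * z) • b := by
      rw [MulOpposite.smul_eq_mul_unop, MulOpposite.unop_op, ← hu,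
        Units.mul_inv_cancel_left]
    rw [hz]
    exact K.smul_mem _ hb
  obtain ⟨g, hg⟩ := h x (Submodule.span Rᵐᵒᵖ ({x} : Set R)) hsmall LinearMap.id
  have hxI : x ∈ Submodule.span Rᵐᵒᵖ ({x} : Set R) := Submodule.mem_span_singleton_self x
  obtain ⟨t, ht⟩ := Submodule.mem_span_singleton.mp (g 1).2
  have hgx : (g x : R) = x := by
    have := hg ⟨x, hxI⟩
    simpa using congrArg Subtype.val this
  have hgx2 : (g x : R) = (g 1 : R) * x := by
    have h2 : g x = MulOpposite.op x • g 1 := by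
      rw [← g.map_smul]
      congr 1
      rw [MulOpposite.smul_eq_mul_unop, MulOpposite.unop_op, one_mul]
    rw [h2]
    rfl
  have ht' : (g 1 : R) = x * t.unop := by rw [← ht]; rfl
  have key : x = x * t.unop * x := by
    calc x = (g x : R) := hgx.symm
    _ = (g 1 : R) * x := hgx2
    _ = x * t.unop * x := by rw [ht']
  have htx : -(t.unop * x) ∈ (⊥ : Ideal R).jacobson :=
    Submodule.neg_mem _ (Ideal.mul_mem_left _ _ hx)
  obtain ⟨u, hu⟩ := aux_isUnit_one_add htx
  have hx0 : x * (1 + -(t.unop * x)) = 0 := by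
    rw [mul_add, mul_one, mul_neg, ← mul_assoc, ← key, add_neg_cancel]
  have hx' : x = 0 := by
    calc x = x * ((1 + -(t.unop * x)) * ↑u⁻¹) := by rw [← hu, Units.mul_inv, mul_one]
    _ = 0 := by rw [← mul_assoc, hx0, zero_mul]
  simp [hx']
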